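/- A triangle-free graph G is (2k+1)-[k]-colorable if and only if every weight function d : V → ℕ with weighted clique number at most 2k admits a proper multicoloring using at most 2k+1 colors. -/

import Mathlib

open Finset

def IsMulticoloring {V : Type*} (G : SimpleGraph V) (d : V → ℕ) (n : ℕ)
    (f : V → Finset (Fin n)) : Prop :=
  (∀ v, d v ≤ (f v).card) ∧ ∀ ⦃u v⦄, G.Adj u v → Disjoint (f u) (f v)

section Aux

variable {α : Type*} [LinearOrder α] [DecidableEq α]

/-- The elements of `s` having fewer than `m` smaller elements in `s`
(the "first `m` elements" of `s`). -/
def firstK (m : ℕ) (s : Finset α) : Finset α :=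
  s.filter (fun x => (s.filter (· < x)).card < m)

/-- The elements of `s` having fewer than `m` larger elements in `s`
(the "last `m` elements" of `s`). -/
def lastK (m : ℕ) (s : Finset α) : Finset α :=
  s.filter (fun x => (s.filter (fun y => x < y)).card < m)

lemma firstK_subset (m : ℕ) (s : Finset α) : firstK m s ⊆ s := filter_subset _ _

lemma lastK_subset (m : ℕ) (s : Finset α) : lastK m s ⊆ s := filter_subset _ _

lemma card_firstK_ge (m : ℕ) (s : Finset α) : min m s.card ≤ (firstK m s).card := by
  by_cases h : s \ firstK m s = ∅
  · have hsub : s ⊆ firstK m s := by rwa [sdiff_eq_empty_iff_subset] at h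
    have := card_le_card hsub
    omega
  · have hne : (s \ firstK m s).Nonempty := nonempty_of_ne_empty h
    set z := (s \ firstK m s).min' hne with hz
    have hzmem : z ∈ s \ firstK m s := min'_mem _ hne
    obtain ⟨hzs, hznt⟩ := mem_sdiff.1 hzmem
    have hm : m ≤ (s.filter (· < z)).card := by
      by_contra hc
      exact hznt (mem_filter.2 ⟨hzs, by omega⟩)
    have hsub : s.filter (· < z) ⊆ firstK m s := by
      intro y hy
      obtain ⟨hys, hyz⟩ := mem_filter.1 hy
      by_contra hyn
      have : z ≤ y := min'_le _ _ (mem_sdiff.2 ⟨hys, hyn⟩)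
      exact absurd hyz (not_lt.2 this)
    have := card_le_card hsub
    omega

lemma card_lastK_ge (m : ℕ) (s : Finset α) : min m s.card ≤ (lastK m s).card := by
  by_cases h : s \ lastK m s = ∅
  · have hsub : s ⊆ lastK m s := by rwa [sdiff_eq_empty_iff_subset] at h
    have := card_le_card hsub
    omega
  · have hne : (s \ lastK m s).Nonempty := nonempty_of_ne_empty h
    set z := (s \ lastK m s).max' hne with hz
    have hzmem : z ∈ s \ lastK m s := max'_mem _ hne
    obtain ⟨hzs, hznt⟩ := mem_sdiff.1 hzmem
    have hm : m ≤ (s.filter (fun y => z < y)).card := by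
      by_contra hc
      exact hznt (mem_filter.2 ⟨hzs, by omega⟩)
    have hsub : s.filter (fun y => z < y) ⊆ lastK m s := by
      intro y hy
      obtain ⟨hys, hyz⟩ := mem_filter.1 hy
      by_contra hyn
      have : y ≤ z := le_max' _ _ (mem_sdiff.2 ⟨hys, hyn⟩)
      exact absurd hyz (not_lt.2 this)
    have := card_le_card hsub
    omega

lemma card_split {s : Finset α} {x : α} (hx : x ∈ s) :
    s.card = (s.filter (· < x)).card + (s.filter (fun y => x < y)).card + 1 := by
  have hunion : s.filter (· < x) ∪ s.filter (fun y => x < y) = s.erase x := by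
    ext y
    simp only [mem_union, mem_filter, mem_erase]
    constructor
    · rintro (⟨hys, hlt⟩ | ⟨hys, hgt⟩)
      · exact ⟨ne_of_lt hlt, hys⟩
      · exact ⟨ne_of_gt hgt, hys⟩
    · rintro ⟨hne, hys⟩
      rcases lt_or_gt_of_ne hne with hlt | hgt
      · exact Or.inl ⟨hys, hlt⟩
      · exact Or.inr ⟨hys, hgt⟩
  have hdisj : Disjoint (s.filter (· < x)) (s.filter (fun y => x < y)) := by
    rw [disjoint_left]
    intro y hy1 hy2
    have h1 := (mem_filter.1 hy1).2
    have h2 := (mem_filter.1 hy2).2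
    exact absurd h2 (not_lt.2 (le_of_lt h1))
  have := card_union_of_disjoint hdisj
  rw [hunion, card_erase_of_mem hx] at this
  have hpos : 1 ≤ s.card := card_pos.2 ⟨x, hx⟩
  omega

end Aux

/-- A triangle-free graph is (2k+1)-[k]-colorable iff every weight function with
weighted clique number at most 2k admits a proper multicoloring with 2k+1 colors. -/
theorem kColorable_iff_multicolorable {V : Type*} (G : SimpleGraph V)
    (htf : G.CliqueFree 3) (k : ℕ) :
    (∃ f : V → Finset (Fin (2 * k + 1)),
        (∀ v, (f v).card = k) ∧ ∀ ⦃u v⦄, G.Adj u v → Disjoint (f u) (f v)) ↔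
    (∀ d : V → ℕ, (∀ v, d v ≤ 2 * k) → (∀ ⦃u v⦄, G.Adj u v → d u + d v ≤ 2 * k) →
        ∃ f : V → Finset (Fin (2 * k + 1)), IsMulticoloring G d (2 * k + 1) f) := by
  constructor
  · rintro ⟨f, hfc, hfd⟩ d hd1 hd2
    refine ⟨fun v => lastK (d v) (f v) ∪ firstK (d v - k) (f v)ᶜ, ?_, ?_⟩
    · intro v
      have hcc : ((f v)ᶜ : Finset (Fin (2 * k + 1))).card = k + 1 := by
        rw [card_compl, hfc v]
        simp only [Fintype.card_fin]
        omega
      have hA : min (d v) k ≤ (lastK (d v) (f v)).card := by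
        have := card_lastK_ge (d v) (f v)
        rwa [hfc v] at this
      have hB : min (d v - k) (k + 1) ≤ (firstK (d v - k) (f v)ᶜ).card := by
        have := card_firstK_ge (d v - k) ((f v)ᶜ)
        rwa [hcc] at this
      have hdAB : Disjoint (lastK (d v) (f v)) (firstK (d v - k) (f v)ᶜ) := by
        rw [disjoint_left]
        intro x hx1 hx2
        have h1 : x ∈ f v := lastK_subset _ _ hx1
        have h2 : x ∈ (f v)ᶜ := firstK_subset _ _ hx2
        exact (mem_compl.1 h2) h1
      rw [card_union_of_disjoint hdAB]
      have := hd1 v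
      omega
    · intro u v huv
      rw [disjoint_left]
      intro x hxu hxv
      have hfuv : Disjoint (f u) (f v) := hfd huv
      have hsum : d u + d v ≤ 2 * k := hd2 huv
      have hsubuv : f u ⊆ (f v)ᶜ := by
        intro y hy
        exact mem_compl.2 (disjoint_left.1 hfuv hy)
      have hsubvu : f v ⊆ (f u)ᶜ := by
        intro y hy
        exact mem_compl.2 (disjoint_right.1 hfuv hy)
      rcases mem_union.1 hxu with hA | hB <;> rcases mem_union.1 hxv with hA' | hB'
      · exact disjoint_left.1 hfuv (lastK_subset _ _ hA) (lastK_subset _ _ hA')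
      · -- x ∈ lastK (d u) (f u), x ∈ firstK (d v - k) (f v)ᶜ
        obtain ⟨hxfu, hgt⟩ := mem_filter.1 hA
        obtain ⟨hxc, hlt⟩ := mem_filter.1 hB'
        have h1 : ((f u).filter (· < x)).card ≤ (((f v)ᶜ).filter (· < x)).card :=
          card_le_card (filter_subset_filter _ hsubuv)
        have hsplit := card_split hxfu
        rw [hfc u] at hsplit
        omega
      · -- symmetric
        obtain ⟨hxfv, hgt⟩ := mem_filter.1 hA'
        obtain ⟨hxc, hlt⟩ := mem_filter.1 hB
        have h1 : ((f v).filter (· < x)).card ≤ (((f u)ᶜ).filter (· < x)).card :=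
          card_le_card (filter_subset_filter _ hsubvu)
        have hsplit := card_split hxfv
        rw [hfc v] at hsplit
        omega
      · obtain ⟨_, hlt1⟩ := mem_filter.1 hB
        obtain ⟨_, hlt2⟩ := mem_filter.1 hB'
        omega
  · intro h
    obtain ⟨f, hf1, hf2⟩ := h (fun _ => k) (fun v => by show k ≤ 2 * k; omega) (fun u v _ => by show k + k ≤ 2 * k; omega)
    choose g hg1 hg2 using fun v => Finset.exists_subset_card_eq (hf1 v)
    exact ⟨g, hg2, fun u v huv => (hf2 huv).mono (hg1 u) (hg1 v)⟩
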